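/- Let Q be a quadratic form on 3×3 matrices which depends only on the symmetric part of its argument and is coercive on symmetric matrices (see context), and let n ∈ ℝ³ be a unit vector. Then for every tangential matrix F (i.e., Fn = 0 and Fᵀn = 0) the function ℝ³ ∋ c ↦ Q(F + c⊗n + n⊗c) attains its minimum at a unique point c(F) ∈ ℝ³, and the resulting map F ↦ c(F) is linear on the space of tangential matrices. -/

import Mathlib

/- Frobenius norm instances on matrices -/
attribute [local instance] Matrix.frobeniusNormedAddCommGroup Matrix.frobeniusNormedSpace

open Matrix

/-- The symmetric part of a matrix. -/
noncomputable def symPart (F : Matrix (Fin 3) (Fin 3) ℝ) : Matrix (Fin 3) (Fin 3) ℝ :=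
  (1 / 2 : ℝ) • (F + Fᵀ)

/-- A matrix is tangential relative to a unit vector `n` if `F n = 0` and `Fᵀ n = 0`. -/
def IsTangential (n : Fin 3 → ℝ) (F : Matrix (Fin 3) (Fin 3) ℝ) : Prop :=
  F.mulVec n = 0 ∧ Fᵀ.mulVec n = 0

/-- for a coercive quadratic form `Q` depending only on the symmetric part, and a
unit vector `n`, the function `c ↦ Q(F + c⊗n + n⊗c)` has a unique minimizer `c(F)` for each
tangential matrix `F`, and `F ↦ c(F)` is linear on tangential matrices. -/
theorem unique_linear_minimizer_of_reduced_quadratic_form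
    (Q : Matrix (Fin 3) (Fin 3) ℝ → ℝ)
    (B : Matrix (Fin 3) (Fin 3) ℝ →ₗ[ℝ] Matrix (Fin 3) (Fin 3) ℝ →ₗ[ℝ] ℝ)
    (hB_symm : ∀ F G, B F G = B G F)
    (hQ : ∀ F, Q F = B F F)
    (hQ_sym : ∀ F, Q F = Q (symPart F))
    (c₀ : ℝ) (hc₀ : 0 < c₀)
    (hQ_coerc : ∀ F, c₀ * ‖symPart F‖ ^ 2 ≤ Q F)
    (n : Fin 3 → ℝ) (hn : ∑ i, n i ^ 2 = 1) :
    ∃ cmap : Matrix (Fin 3) (Fin 3) ℝ → (Fin 3 → ℝ),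
      (∀ F, IsTangential n F →
        (∀ c : Fin 3 → ℝ,
          Q (F + vecMulVec (cmap F) n + vecMulVec n (cmap F))
            ≤ Q (F + vecMulVec c n + vecMulVec n c)) ∧
        (∀ c : Fin 3 → ℝ,
          (∀ c' : Fin 3 → ℝ,
            Q (F + vecMulVec c n + vecMulVec n c) ≤ Q (F + vecMulVec c' n + vecMulVec n c'))
          → c = cmap F)) ∧
      (∀ F G, IsTangential n F → IsTangential n G → cmap (F + G) = cmap F + cmap G) ∧
      (∀ (a : ℝ) F, IsTangential n F → cmap (a • F) = a • cmap F) := by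
  classical
  -- the linear map c ↦ c⊗n + n⊗c
  set L : (Fin 3 → ℝ) →ₗ[ℝ] Matrix (Fin 3) (Fin 3) ℝ :=
    { toFun := fun c => vecMulVec c n + vecMulVec n c
      map_add' := by
        intro x y; ext i j
        simp [vecMulVec_apply, Matrix.add_apply]; ring
      map_smul' := by
        intro a x; ext i j
        simp [vecMulVec_apply, Matrix.smul_apply, smul_eq_mul]; ring } with hL
  have hLapp : ∀ c, L c = vecMulVec c n + vecMulVec n c := fun c => rfl
  have hrw : ∀ (F : Matrix (Fin 3) (Fin 3) ℝ) (c : Fin 3 → ℝ),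
      F + vecMulVec c n + vecMulVec n c = F + L c := by
    intro F c; rw [hLapp, ← add_assoc]
  -- L c is symmetric
  have hLsym : ∀ c, (L c)ᵀ = L c := by
    intro c; ext i j
    simp [hLapp, vecMulVec_apply, Matrix.transpose_apply, Matrix.add_apply]; ring
  have hsymL : ∀ c, symPart (L c) = L c := by
    intro c
    rw [symPart, hLsym, ← two_smul ℝ, smul_smul]
    norm_num
  have hnn : n ⬝ᵥ n = 1 := by
    simpa [dotProduct, sq] using hn
  -- L is injective
  have hLinj : ∀ c, L c = 0 → c = 0 := by
    intro c hc
    have h2 : (L c).mulVec n = c + (c ⬝ᵥ n) • n := by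
      ext i
      simp only [hLapp, Matrix.add_mulVec, mulVec, vecMulVec_apply, dotProduct,
        Matrix.add_apply, Pi.add_apply, Pi.smul_apply, smul_eq_mul, add_mul,
        Finset.sum_add_distrib]
      have e1 : (∑ j, c i * n j * n j) = c i * (∑ j, n j * n j) := by
        rw [Finset.mul_sum]; exact Finset.sum_congr rfl fun _ _ => by ring
      have e2 : (∑ j, n i * c j * n j) = n i * (∑ j, c j * n j) := by
        rw [Finset.mul_sum]; exact Finset.sum_congr rfl fun _ _ => by ring
      rw [e1, e2, show (∑ j, n j * n j) = 1 from by simpa [dotProduct] using hnn]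
      ring
    have h1 : c + (c ⬝ᵥ n) • n = 0 := by rw [← h2, hc]; simp
    have h3 : (c + (c ⬝ᵥ n) • n) ⬝ᵥ n = 0 := by rw [h1]; simp
    rw [add_dotProduct, smul_dotProduct, hnn, smul_eq_mul, mul_one] at h3
    have h4 : c ⬝ᵥ n = 0 := by linarith
    have := h1
    rw [h4] at this
    simpa using this
  -- positivity of Q on the range of L
  have hQpos : ∀ d, c₀ * ‖L d‖ ^ 2 ≤ Q (L d) := by
    intro d
    have := hQ_coerc (L d)
    rwa [hsymL] at this
  have hQzero : ∀ d, Q (L d) ≤ 0 → d = 0 := by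
    intro d hd
    have h1 : c₀ * ‖L d‖ ^ 2 ≤ 0 := le_trans (hQpos d) hd
    have h2 : ‖L d‖ ^ 2 ≤ 0 := le_of_not_gt fun h => absurd h1 (not_le.mpr (mul_pos hc₀ h))
    have h3 : ‖L d‖ = 0 :=
      (pow_eq_zero_iff two_ne_zero).mp (le_antisymm h2 (sq_nonneg _))
    exact hLinj d (norm_eq_zero.mp h3)
  -- the bilinear form b(c,d) = B(Lc, Ld) and its nondegeneracy
  set b : LinearMap.BilinForm ℝ (Fin 3 → ℝ) := B.compl₁₂ L L with hb_def
  have hbapp : ∀ c d, b c d = B (L c) (L d) := fun c d => rfl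
  have hb : b.Nondegenerate := by
    constructor <;>
    · intro c hc
      apply hQzero c
      rw [hQ]
      have := hc c
      rw [hbapp] at this
      exact le_of_eq this
  -- the minimizer map
  set cmap : Matrix (Fin 3) (Fin 3) ℝ → (Fin 3 → ℝ) :=
    fun F => (LinearMap.BilinForm.toDual b hb).symm (-((B F).comp L)) with hcmap
  have hkey : ∀ F d, B (L (cmap F)) (L d) = -(B F (L d)) := by
    intro F d
    have h := LinearMap.BilinForm.apply_toDual_symm_apply (B := b) (hB := hb)
      (f := -((B F).comp L)) (v := d)
    rw [hbapp] at h
    exact h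
  -- expansion of Q around the minimizer
  have hexp : ∀ F c, Q (F + L c) = Q (F + L (cmap F)) + Q (L (c - cmap F)) := by
    intro F c
    have hc : L c = L (cmap F) + L (c - cmap F) := by rw [← map_add]; congr 1; abel
    rw [hQ, hQ, hQ, hc, ← add_assoc]
    simp only [map_add, LinearMap.add_apply]
    have hcross : B (F + L (cmap F)) (L (c - cmap F)) = 0 := by
      simp only [map_add, LinearMap.add_apply, hkey]
      ring
    have hcross' : B (L (c - cmap F)) (F + L (cmap F)) = 0 := by
      rw [hB_symm]; exact hcross
    simp only [map_add, LinearMap.add_apply] at hcross hcross' ⊢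
    linarith
  refine ⟨cmap, fun F _ => ⟨?_, ?_⟩, ?_, ?_⟩
  · intro c
    rw [hrw, hrw, hexp F c]
    have h0 : (0:ℝ) ≤ Q (L (c - cmap F)) := by
      refine le_trans ?_ (hQpos _)
      positivity
    linarith
  · intro c hcmin
    have h1 := hcmin (cmap F)
    rw [hrw, hrw, hexp F c] at h1
    have h2 : Q (L (c - cmap F)) ≤ 0 := by linarith
    have := hQzero _ h2
    have : c - cmap F = 0 := this
    have := sub_eq_zero.mp this
    exact this
  · intro F G _ _
    have hF : ∀ H, cmap H = (LinearMap.BilinForm.toDual b hb).symm (-((B H).comp L)) :=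
      fun _ => rfl
    rw [hF, hF, hF, ← _root_.map_add]
    congr 1
    ext d
    simp [_root_.map_add]
    ring
  · intro a F _
    have hF : ∀ H, cmap H = (LinearMap.BilinForm.toDual b hb).symm (-((B H).comp L)) :=
      fun _ => rfl
    rw [hF, hF, ← _root_.map_smul]
    congr 1
    ext d
    simp [_root_.map_smul]
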